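/- For any word w over {a,b} and any natural number k ≥ 1 (with w nonempty), m(w·a·(ab)^k·a·b) > m(w·a·b·(ab)^k·b). More precisely, for any nonempty word w and any k ∈ ℕ, the difference m(w · a(ab)^k ab) − m(w · ab(ab)^k b) equals P(2k+1) times a positive quantity, hence is strictly positive. -/

import Mathlib

def A : Matrix (Fin 2) (Fin 2) ℤ := !![1,1;1,2]
def B : Matrix (Fin 2) (Fin 2) ℤ := !![2,1;1,1]
/-- matrix of a word: `false` is the letter `a`, `true` is the letter `b` -/
def Mw (w : List Bool) : Matrix (Fin 2) (Fin 2) ℤ :=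
  (w.map (fun x => if x then B else A)).prod
/-- the m-value: the top-right entry -/
def mval (w : List Bool) : ℤ := Mw w 0 1
def U : Matrix (Fin 2) (Fin 2) ℤ := !![0,-1;1,0]
def J : Matrix (Fin 2) (Fin 2) ℤ := !![0,1;1,0]
/-- reversal with letters exchanged -/
def Ebar (w : List Bool) : List Bool := (w.map (fun x => !x)).reverse
def pell : ℕ → ℕ
  | 0 => 0
  | 1 => 1
  | n+2 => 2 * pell (n+1) + pell n

lemma Mw_append (u v : List Bool) : Mw (u ++ v) = Mw u * Mw v := by
  simp [Mw, List.map_append, List.prod_append]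

lemma Mw_rep (k : ℕ) : Mw ((List.replicate k [false, true]).flatten) = (A * B) ^ k := by
  induction k with
  | zero => simp [Mw]
  | succ n ih =>
    rw [List.replicate_succ,
      show ([false, true] :: List.replicate n [false, true]).flatten
        = [false, true] ++ (List.replicate n [false, true]).flatten from rfl,
      Mw_append, ih, pow_succ']
    congr 1
    simp [Mw, A, B]

lemma ABpow (k : ℕ) : ∃ a b : ℤ, 1 ≤ a ∧ 0 ≤ b ∧ (A * B) ^ k = !![a, b; 2*b, a] := by
  induction k with
  | zero => exact ⟨1, 0, le_refl 1, le_refl 0, by simp [Matrix.one_fin_two]⟩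
  | succ n ih =>
    obtain ⟨a, b, ha, hb, h⟩ := ih
    refine ⟨3*a + 4*b, 2*a + 3*b, by linarith, by linarith, ?_⟩
    rw [pow_succ, h]
    show _ * (A * B) = _
    have hAB : A * B = !![3, 2; 4, 3] := by
      simp [A, B, Matrix.mul_fin_two]
    rw [hAB, Matrix.mul_fin_two]
    congr 1 <;> ring_nf

lemma Mw_entries (w : List Bool) :
    1 ≤ Mw w 0 0 ∧ 1 ≤ Mw w 1 1 ∧ 0 ≤ Mw w 0 1 ∧ 0 ≤ Mw w 1 0 := by
  induction w with
  | nil => simp [Mw]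
  | cons c t ih =>
    obtain ⟨h00, h11, h01, h10⟩ := ih
    have : Mw (c :: t) = (if c then B else A) * Mw t := by
      simp [Mw]
    rw [this]
    cases c <;>
      simp only [if_true, if_false, A, B, Matrix.mul_apply, Fin.sum_univ_two] <;>
      norm_num <;>
      refine ⟨?_, ?_, ?_, ?_⟩ <;> nlinarith

lemma Mw01_pos (w : List Bool) (hw : w ≠ []) : 1 ≤ Mw w 0 1 := by
  cases w with
  | nil => exact absurd rfl hw
  | cons c t =>
    obtain ⟨h00, h11, h01, h10⟩ := Mw_entries t
    have : Mw (c :: t) = (if c then B else A) * Mw t := by simp [Mw]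
    rw [this]
    cases c <;>
      simp only [if_true, if_false, A, B, Matrix.mul_apply, Fin.sum_univ_two] <;>
      norm_num <;> nlinarith

theorem stmt17 (w : List Bool) (hw : w ≠ []) (k : ℕ) :
    mval (w ++ [false] ++ (List.replicate k [false, true]).flatten ++ [false, true]) >
    mval (w ++ [false, true] ++ (List.replicate k [false, true]).flatten ++ [true]) := by
  obtain ⟨a, b, ha, hb, hC⟩ := ABpow k
  have hW := Mw01_pos w hw
  obtain ⟨hW00, -, -, -⟩ := Mw_entries w
  have hAB : A * B = !![3, 2; 4, 3] := by
    simp [A, B, Matrix.mul_fin_two]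
  have hfa : Mw [false] = A := by simp [Mw]
  have hft : Mw [false, true] = A * B := by simp [Mw]
  have ht : Mw [true] = B := by simp [Mw]
  have e1 : Mw (w ++ [false] ++ (List.replicate k [false, true]).flatten ++ [false, true])
      = Mw w * (A * !![a, b; 2*b, a] * !![3, 2; 4, 3]) := by
    rw [Mw_append, Mw_append, Mw_append, Mw_rep, hfa, hft, hC, hAB]
    noncomm_ring
  have e2 : Mw (w ++ [false, true] ++ (List.replicate k [false, true]).flatten ++ [true])
      = Mw w * (!![3, 2; 4, 3] * !![a, b; 2*b, a] * B) := by
    rw [Mw_append, Mw_append, Mw_append, Mw_rep, hft, ht, hC, hAB]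
    noncomm_ring
  have hS1 : A * !![a, b; 2*b, a] * !![3, 2; 4, 3]
      = !![7*a + 10*b, 5*a + 7*b; 11*a + 16*b, 8*a + 11*b] := by
    rw [A, Matrix.mul_fin_two, Matrix.mul_fin_two]
    ext i j
    fin_cases i <;> fin_cases j <;> simp <;> ring
  have hS2 : !![3, 2; 4, 3] * !![a, b; 2*b, a] * B
      = !![8*a + 11*b, 5*a + 7*b; 11*a + 16*b, 7*a + 10*b] := by
    rw [B, Matrix.mul_fin_two, Matrix.mul_fin_two]
    ext i j
    fin_cases i <;> fin_cases j <;> simp <;> ring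
  rw [gt_iff_lt, mval, mval, e1, e2, hS1, hS2]
  simp only [Matrix.mul_apply, Fin.sum_univ_two]
  norm_num
  nlinarith [hW, ha, hb]
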